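/- Let G be a finite connected simple graph with domination number γ(G) ≥ 2. For any finite simple graph H, μt(G ∘ H) = n(G)·(n(H) − 1) + μt(G), where G ∘ H is the lexicographic product. -/

import Mathlib

open SimpleGraph

/-- `X` is a total mutual-visibility set of `G`: every two vertices of `G` are `X`-visible,
i.e. joined by a shortest path whose internal vertices avoid `X`. -/
def IsTMVSet {V : Type*} (G : SimpleGraph V) (X : Set V) : Prop :=
  ∀ x y : V, ∃ p : G.Walk x y, p.length = G.dist x y ∧
    ∀ w ∈ p.support, w ≠ x → w ≠ y → w ∉ X

/-- The total mutual-visibility number of `G`. -/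
noncomputable def muT {V : Type*} (G : SimpleGraph V) : ℕ :=
  sSup {n : ℕ | ∃ X : Set V, IsTMVSet G X ∧ X.ncard = n}

/-- `D` is a dominating set of `G`. -/
def IsDomSet {V : Type*} (G : SimpleGraph V) (D : Set V) : Prop :=
  ∀ v : V, v ∉ D → ∃ u ∈ D, G.Adj u v

/-- The domination number of `G`. -/
noncomputable def gammaDom {V : Type*} (G : SimpleGraph V) : ℕ :=
  sInf {n : ℕ | ∃ D : Set V, IsDomSet G D ∧ D.ncard = n}

/-- `D` is a connected dominating set of `G`. -/
def IsConnDomSet {V : Type*} (G : SimpleGraph V) (D : Set V) : Prop :=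
  IsDomSet G D ∧ (G.induce D).Connected

/-- The connected domination number of `G`. -/
noncomputable def gammaConnDom {V : Type*} (G : SimpleGraph V) : ℕ :=
  sInf {n : ℕ | ∃ D : Set V, IsConnDomSet G D ∧ D.ncard = n}

/-- The closed neighborhood of a vertex. -/
def closedNbhd {V : Type*} (G : SimpleGraph V) (v : V) : Set V :=
  insert v (G.neighborSet v)

/-- The set of simplicial vertices of `G`. -/
def simpSet {V : Type*} (G : SimpleGraph V) : Set V :=
  {v | G.IsClique (G.neighborSet v)}

/-- The set `P(G)` of vertices that appear as the unique common closed neighbor of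
two vertices. -/
def pSet {V : Type*} (G : SimpleGraph V) : Set V :=
  {v | ∃ u w : V, closedNbhd G u ∩ closedNbhd G w = {v}}

/-- The set `C(G)` of vertices belonging to every maximum total mutual-visibility set. -/
def compulsorySet {V : Type*} (G : SimpleGraph V) : Set V :=
  {v | ∀ X : Set V, IsTMVSet G X → X.ncard = muT G → v ∈ X}

/-- The set `F(G)` of vertices belonging to no maximum total mutual-visibility set. -/
def forbiddenSet {V : Type*} (G : SimpleGraph V) : Set V :=
  {v | ∀ X : Set V, IsTMVSet G X → X.ncard = muT G → v ∉ X}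

/-- The independent total mutual-visibility number of `G`. -/
noncomputable def muIT {V : Type*} (G : SimpleGraph V) : ℕ :=
  sSup {n : ℕ | ∃ X : Set V, IsTMVSet G X ∧ (∀ u ∈ X, ∀ v ∈ X, ¬ G.Adj u v) ∧ X.ncard = n}

/-- The join `G + H` of two graphs. -/
def joinGraph {V W : Type*} (G : SimpleGraph V) (H : SimpleGraph W) :
    SimpleGraph (V ⊕ W) :=
  SimpleGraph.fromRel (fun x y =>
    (∃ a b, x = Sum.inl a ∧ y = Sum.inl b ∧ G.Adj a b) ∨
    (∃ a b, x = Sum.inr a ∧ y = Sum.inr b ∧ H.Adj a b) ∨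
    (∃ a b, x = Sum.inl a ∧ y = Sum.inr b))

/-- The corona product `G ⊙ H`: a copy of `G` together with a copy `Hᵢ` of `H` for each
vertex `uᵢ` of `G`, where `uᵢ` is joined to all vertices of `Hᵢ`. -/
def coronaProd {V W : Type*} (G : SimpleGraph V) (H : SimpleGraph W) :
    SimpleGraph (V ⊕ V × W) :=
  SimpleGraph.fromRel (fun x y =>
    (∃ a b, x = Sum.inl a ∧ y = Sum.inl b ∧ G.Adj a b) ∨
    (∃ i w w', x = Sum.inr (i, w) ∧ y = Sum.inr (i, w') ∧ H.Adj w w') ∨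
    (∃ i w, x = Sum.inl i ∧ y = Sum.inr (i, w)))

/-- The lexicographic product `G ∘ H`. -/
def lexProd {V W : Type*} (G : SimpleGraph V) (H : SimpleGraph W) :
    SimpleGraph (V × W) where
  Adj x y := G.Adj x.1 y.1 ∨ (x.1 = y.1 ∧ H.Adj x.2 y.2)
  symm := ⟨fun x y h => by
    rcases h with h | ⟨h1, h2⟩
    · exact Or.inl h.symm
    · exact Or.inr ⟨h1.symm, h2.symm⟩⟩
  loopless := ⟨fun x h => by
    rcases h with h | ⟨_, h⟩
    · exact G.loopless.irrefl _ h
    · exact H.loopless.irrefl _ h⟩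

/-- `B` induces a 2-connected subgraph of `G`. -/
def IsTwoConnSet {V : Type*} (G : SimpleGraph V) (B : Set V) : Prop :=
  3 ≤ B.ncard ∧ (G.induce B).Connected ∧ ∀ v ∈ B, (G.induce (B \ {v})).Connected

section AuxLemmas

variable {V W : Type*}

lemma lexProd_adj {G : SimpleGraph V} {H : SimpleGraph W} {u v : V × W} :
    (lexProd G H).Adj u v ↔ (G.Adj u.1 v.1 ∨ (u.1 = v.1 ∧ H.Adj u.2 v.2)) := Iff.rfl

/-- Projection of a walk in the lexicographic product to the first factor. -/
lemma exists_proj_walk {G : SimpleGraph V} {H : SimpleGraph W} {u v : V × W}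
    (p : (lexProd G H).Walk u v) :
    ∃ q : G.Walk u.1 v.1, q.length ≤ p.length ∧
      ∀ c ∈ q.support, ∃ d, (c, d) ∈ p.support := by
  induction p with
  | nil =>
    rename_i z
    refine ⟨SimpleGraph.Walk.nil, le_rfl, ?_⟩
    intro c hc
    rw [SimpleGraph.Walk.support_nil, List.mem_singleton] at hc
    subst hc
    exact ⟨z.2, by simp⟩
  | @cons u m v e p ih =>
    obtain ⟨q, hq1, hq2⟩ := ih
    rcases lexProd_adj.mp e with hGadj | ⟨heq, -⟩
    · refine ⟨SimpleGraph.Walk.cons hGadj q, ?_, ?_⟩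
      · simp only [SimpleGraph.Walk.length_cons]
        exact Nat.succ_le_succ hq1
      · intro c hc
        rw [SimpleGraph.Walk.support_cons, List.mem_cons] at hc
        rcases hc with rfl | hc
        · exact ⟨u.2, by simp⟩
        · obtain ⟨d, hd⟩ := hq2 c hc
          refine ⟨d, ?_⟩
          rw [SimpleGraph.Walk.support_cons]
          exact List.mem_cons_of_mem _ hd
    · refine ⟨q.copy heq.symm rfl, ?_, ?_⟩
      · rw [SimpleGraph.Walk.length_copy, SimpleGraph.Walk.length_cons]
        exact hq1.trans (Nat.le_succ _)
      · intro c hc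
        rw [SimpleGraph.Walk.support_copy] at hc
        obtain ⟨d, hd⟩ := hq2 c hc
        refine ⟨d, ?_⟩
        rw [SimpleGraph.Walk.support_cons]
        exact List.mem_cons_of_mem _ hd

/-- Lifting a path of `G` to a walk of the lexicographic product, with internal
vertices having second coordinate `w₀`. -/
lemma exists_lift_walk {G : SimpleGraph V} {H : SimpleGraph W} (w₀ y' : W) {a b : V}
    (p : G.Walk a b) : p.IsPath → a ≠ b → ∀ y : W,
    ∃ q : (lexProd G H).Walk (a, y) (b, y'), q.length ≤ p.length ∧
      ∀ v ∈ q.support, v = (a, y) ∨ v = (b, y') ∨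
        (v.2 = w₀ ∧ v.1 ∈ p.support ∧ v.1 ≠ a ∧ v.1 ≠ b) := by
  induction p with
  | nil => exact fun _ h _ => absurd rfl h
  | @cons a c b e q ih =>
    intro hp hab y
    rw [SimpleGraph.Walk.cons_isPath_iff] at hp
    by_cases hc : c = b
    · subst hc
      refine ⟨SimpleGraph.Walk.cons (lexProd_adj.mpr (Or.inl e)) SimpleGraph.Walk.nil,
        by simp, ?_⟩
      intro v hv
      simp only [SimpleGraph.Walk.support_cons, SimpleGraph.Walk.support_nil,
        List.mem_cons, List.mem_singleton, List.not_mem_nil, or_false] at hv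
      rcases hv with rfl | rfl
      · exact Or.inl rfl
      · exact Or.inr (Or.inl rfl)
    · obtain ⟨q', h1, h2⟩ := ih hp.1 hc w₀
      refine ⟨SimpleGraph.Walk.cons (lexProd_adj.mpr (Or.inl e)) q', ?_, ?_⟩
      · simp only [SimpleGraph.Walk.length_cons]
        exact Nat.succ_le_succ h1
      · intro v hv
        rw [SimpleGraph.Walk.support_cons, List.mem_cons] at hv
        rcases hv with rfl | hv
        · exact Or.inl rfl
        rcases h2 v hv with rfl | rfl | ⟨hv2, hv1, hvc, hvb⟩
        · refine Or.inr (Or.inr ⟨rfl, ?_, ?_, hc⟩)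
          · rw [SimpleGraph.Walk.support_cons]
            exact List.mem_cons_of_mem _ q.start_mem_support
          · exact fun h => hp.2 (h ▸ q.start_mem_support)
        · exact Or.inr (Or.inl rfl)
        · refine Or.inr (Or.inr ⟨hv2, ?_, ?_, hvb⟩)
          · rw [SimpleGraph.Walk.support_cons]
            exact List.mem_cons_of_mem _ hv1
          · exact fun h => hp.2 (h ▸ hv1)

/-- Distance in the lexicographic product between vertices over distinct `G`-vertices. -/
lemma lexProd_dist_of_ne {G : SimpleGraph V} {H : SimpleGraph W} (hG : G.Connected)
    {x x' : V} (hxx : x ≠ x') (y y' : W) :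
    (lexProd G H).dist (x, y) (x', y') = G.dist x x' := by
  classical
  obtain ⟨p, hp⟩ := hG.exists_walk_length_eq_dist x x'
  have hlen : p.bypass.length = G.dist x x' :=
    le_antisymm (hp ▸ p.length_bypass_le) (SimpleGraph.dist_le _)
  obtain ⟨q, hq1, -⟩ := exists_lift_walk (H := H) y' y' p.bypass p.bypass_isPath hxx y
  have h1 : (lexProd G H).dist (x, y) (x', y') ≤ G.dist x x' :=
    le_trans (SimpleGraph.dist_le q) (hq1.trans hlen.le)
  have hreach : (lexProd G H).Reachable (x, y) (x', y') := ⟨q⟩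
  obtain ⟨r, hr⟩ := hreach.exists_walk_length_eq_dist
  obtain ⟨s, hs1, -⟩ := exists_proj_walk r
  have h2 : G.dist x x' ≤ (lexProd G H).dist (x, y) (x', y') :=
    le_trans (SimpleGraph.dist_le s) (hr ▸ hs1)
  omega

/-- If `γ(G) ≥ 2` and `S` is a total mutual-visibility set, every vertex of `G` has a
neighbor outside `S`. -/
lemma exists_adj_notMem {G : SimpleGraph V} (hG : G.Connected) (hγ : 2 ≤ gammaDom G)
    {S : Set V} (hS : IsTMVSet G S) (x : V) : ∃ a, G.Adj x a ∧ a ∉ S := by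
  have hdom : ¬ IsDomSet G {x} := by
    intro h
    have h1 : gammaDom G ≤ 1 := Nat.sInf_le ⟨{x}, h, Set.ncard_singleton x⟩
    omega
  rw [IsDomSet] at hdom; push_neg at hdom
  obtain ⟨z, hz1, hz2⟩ := hdom
  have hz1' : x ≠ z := fun h => hz1 (by simp [h])
  have hz2' : ¬ G.Adj x z := hz2 x (Set.mem_singleton x)
  obtain ⟨p, -, hp2⟩ := hS x z
  cases p with
  | nil => exact absurd rfl hz1'
  | cons e q =>
    refine ⟨_, e, hp2 _ ?_ e.ne' (fun h => hz2' (h ▸ e))⟩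
    rw [SimpleGraph.Walk.support_cons]
    exact List.mem_cons_of_mem _ q.start_mem_support

lemma tmv_empty {G : SimpleGraph V} (hG : G.Connected) : IsTMVSet G ∅ := fun x y => by
  obtain ⟨p, hp⟩ := hG.exists_walk_length_eq_dist x y
  exact ⟨p, hp, fun w _ _ _ => Set.notMem_empty w⟩

lemma tmv_bddAbove [Fintype V] (G : SimpleGraph V) :
    BddAbove {n : ℕ | ∃ X : Set V, IsTMVSet G X ∧ X.ncard = n} := by
  refine ⟨Fintype.card V, ?_⟩
  rintro n ⟨X, -, rfl⟩
  have h := Set.ncard_le_ncard (Set.subset_univ X) Set.finite_univ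
  simpa [Set.ncard_univ, Nat.card_eq_fintype_card] using h

lemma muT_mem [Fintype V] {G : SimpleGraph V} (hG : G.Connected) :
    ∃ X : Set V, IsTMVSet G X ∧ X.ncard = muT G := by
  have h0 : (0 : ℕ) ∈ {n : ℕ | ∃ X : Set V, IsTMVSet G X ∧ X.ncard = n} :=
    ⟨∅, tmv_empty hG, by simp⟩
  exact Nat.sSup_mem ⟨0, h0⟩ (tmv_bddAbove G)

end AuxLemmas

/-- For `G` connected with `γ(G) ≥ 2` and any graph `H`,
`μt(G ∘ H) = n(G) (n(H) - 1) + μt(G)`. -/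
theorem muT_lexProd {V W : Type*} [Fintype V] [Fintype W] [Nonempty W]
    (G : SimpleGraph V) (H : SimpleGraph W) (hG : G.Connected) (hγ : 2 ≤ gammaDom G) :
    muT (lexProd G H) = Fintype.card V * (Fintype.card W - 1) + muT G := by
  classical
  obtain ⟨S, hS, hScard⟩ := muT_mem hG
  obtain ⟨w₀⟩ := ‹Nonempty W›
  have hnb : ∀ x : V, ∃ a, G.Adj x a ∧ a ∉ S := exists_adj_notMem hG hγ hS
  set X : Set (V × W) := {p : V × W | p.2 = w₀ → p.1 ∈ S} with hXdef
  -- X is a total mutual-visibility set of the lexicographic product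
  have hXtmv : IsTMVSet (lexProd G H) X := by
    rintro ⟨x, y⟩ ⟨x', y'⟩
    by_cases hxx : x = x'
    · subst hxx
      by_cases hyy : y = y'
      · subst hyy
        refine ⟨SimpleGraph.Walk.nil, by simp [SimpleGraph.dist_self], ?_⟩
        intro w hw hne _
        rw [SimpleGraph.Walk.support_nil, List.mem_singleton] at hw
        exact absurd hw hne
      · by_cases hadj : H.Adj y y'
        · set q : (lexProd G H).Walk (x, y) (x, y') :=
            SimpleGraph.Walk.cons
              (lexProd_adj.mpr (Or.inr ⟨rfl, hadj⟩) :
                (lexProd G H).Adj (x, y) (x, y')) SimpleGraph.Walk.nil with hq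
          refine ⟨q, ?_, ?_⟩
          · have hle : (lexProd G H).dist (x, y) (x, y') ≤ 1 := by
              have := SimpleGraph.dist_le q
              simpa [hq] using this
            have hne : ((x, y) : V × W) ≠ (x, y') := fun h => hyy (congrArg Prod.snd h)
            have hpos : 0 < (lexProd G H).dist (x, y) (x, y') :=
              SimpleGraph.Reachable.pos_dist_of_ne ⟨q⟩ hne
            have hq1 : q.length = 1 := by rw [hq]; rfl
            omega
          · intro w hw h1 h2
            simp only [hq, SimpleGraph.Walk.support_cons, SimpleGraph.Walk.support_nil,
              List.mem_cons, List.mem_singleton, List.not_mem_nil, or_false] at hw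
            rcases hw with rfl | rfl
            · exact absurd rfl h1
            · exact absurd rfl h2
        · obtain ⟨a, ha, haS⟩ := hnb x
          set q : (lexProd G H).Walk (x, y) (x, y') :=
            SimpleGraph.Walk.cons
              (lexProd_adj.mpr (Or.inl ha) : (lexProd G H).Adj (x, y) (a, w₀))
              (SimpleGraph.Walk.cons
                (lexProd_adj.mpr (Or.inl ha.symm) :
                  (lexProd G H).Adj (a, w₀) (x, y')) SimpleGraph.Walk.nil) with hq
          refine ⟨q, ?_, ?_⟩
          · have hle : (lexProd G H).dist (x, y) (x, y') ≤ 2 := by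
              have := SimpleGraph.dist_le q
              simpa [hq] using this
            have hne : ((x, y) : V × W) ≠ (x, y') := fun h => hyy (congrArg Prod.snd h)
            have hpos : 0 < (lexProd G H).dist (x, y) (x, y') :=
              SimpleGraph.Reachable.pos_dist_of_ne ⟨q⟩ hne
            have hone : (lexProd G H).dist (x, y) (x, y') ≠ 1 := by
              intro h
              have hreach2 : (lexProd G H).Reachable (x, y) (x, y') := ⟨q⟩
              obtain ⟨r, hr⟩ := hreach2.exists_walk_length_eq_dist
              have hadj' := r.adj_of_length_eq_one (hr.trans h)
              rcases lexProd_adj.mp hadj' with h' | ⟨-, h'⟩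
              · exact G.irrefl h'
              · exact hadj h'
            have hq1 : q.length = 2 := by rw [hq]; rfl
            omega
          · intro w hw h1 h2
            simp only [hq, SimpleGraph.Walk.support_cons, SimpleGraph.Walk.support_nil,
              List.mem_cons, List.mem_singleton, List.not_mem_nil, or_false] at hw
            rcases hw with rfl | rfl | rfl
            · exact absurd rfl h1
            · exact fun hmem => haS (hmem rfl)
            · exact absurd rfl h2
    · obtain ⟨p, hp1, hp2⟩ := hS x x'
      have hb1 : p.bypass.length = G.dist x x' :=
        le_antisymm (hp1 ▸ p.length_bypass_le) (SimpleGraph.dist_le _)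
      obtain ⟨q, hq1, hq2⟩ :=
        exists_lift_walk (H := H) w₀ y' p.bypass p.bypass_isPath hxx y
      have hdist : (lexProd G H).dist (x, y) (x', y') = G.dist x x' := lexProd_dist_of_ne hG hxx y y'
      refine ⟨q, ?_, ?_⟩
      · have := SimpleGraph.dist_le q
        omega
      · intro w hw h1 h2
        rcases hq2 w hw with rfl | rfl | ⟨hw2, hw1, hwx, hwx'⟩
        · exact absurd rfl h1
        · exact absurd rfl h2
        · have hwS : w.1 ∉ S := hp2 w.1 (p.support_bypass_subset hw1) hwx hwx'
          exact fun hmem => hwS (hmem hw2)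
  -- cardinality of X
  have hXc : Xᶜ = (fun a => (a, w₀)) '' Sᶜ := by
    ext ⟨c, b⟩
    simp only [Set.mem_compl_iff, hXdef, Set.mem_setOf_eq, Set.mem_image, Prod.mk.injEq]
    constructor
    · intro h
      push_neg at h
      exact ⟨c, h.2, rfl, h.1.symm⟩
    · rintro ⟨a, ha, rfl, rfl⟩
      push_neg
      exact ⟨rfl, ha⟩
  have hsle : S.ncard ≤ Fintype.card V := by
    have h := Set.ncard_le_ncard (Set.subset_univ S) Set.finite_univ
    simpa [Set.ncard_univ, Nat.card_eq_fintype_card] using h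
  have hW : 1 ≤ Fintype.card W := Fintype.card_pos
  have hXcard : X.ncard = Fintype.card V * (Fintype.card W - 1) + S.ncard := by
    have h1 : Xᶜ.ncard = Sᶜ.ncard := by
      rw [hXc]
      exact Set.ncard_image_of_injective _ (fun a b h => congrArg Prod.fst h)
    have h2 : Sᶜ.ncard = Fintype.card V - S.ncard := by
      rw [Set.compl_eq_univ_diff, Set.ncard_diff (Set.subset_univ S),
        Set.ncard_univ, Nat.card_eq_fintype_card]
    have h3 : X.ncard + Xᶜ.ncard = Fintype.card V * Fintype.card W := by
      rw [← Set.ncard_union_eq disjoint_compl_right, Set.union_compl_self,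
        Set.ncard_univ, Nat.card_eq_fintype_card, Fintype.card_prod]
    obtain ⟨k, hk⟩ : ∃ k, Fintype.card W = k + 1 := ⟨Fintype.card W - 1, by omega⟩
    rw [hk] at h3 ⊢
    rw [Nat.add_sub_cancel]
    have e1 : Fintype.card V * (k + 1) = Fintype.card V * k + Fintype.card V := by ring
    rw [e1] at h3
    omega
  have hmemLower : Fintype.card V * (Fintype.card W - 1) + muT G ∈
      {n : ℕ | ∃ Y : Set (V × W), IsTMVSet (lexProd G H) Y ∧ Y.ncard = n} :=
    ⟨X, hXtmv, by rw [hXcard, hScard]⟩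
  -- upper bound
  have hub : ∀ n ∈ {n : ℕ | ∃ Y : Set (V × W), IsTMVSet (lexProd G H) Y ∧ Y.ncard = n},
      n ≤ Fintype.card V * (Fintype.card W - 1) + muT G := by
    rintro n ⟨Y, hY, rfl⟩
    set T : Set V := {x : V | ∀ b : W, (x, b) ∈ Y} with hTdef
    have hTtmv : IsTMVSet G T := by
      intro x x'
      by_cases hxx : x = x'
      · subst hxx
        refine ⟨SimpleGraph.Walk.nil, by simp [SimpleGraph.dist_self], ?_⟩
        intro w hw hne _
        rw [SimpleGraph.Walk.support_nil, List.mem_singleton] at hw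
        exact absurd hw hne
      · obtain ⟨p, hp1, hp2⟩ := hY (x, w₀) (x', w₀)
        have hdist : (lexProd G H).dist (x, w₀) (x', w₀) = G.dist x x' :=
          lexProd_dist_of_ne hG hxx w₀ w₀
        obtain ⟨q, hq1, hq2⟩ := exists_proj_walk p
        have hql : q.length = G.dist x x' := by
          have hdl : G.dist x x' ≤ q.length := SimpleGraph.dist_le q
          omega
        refine ⟨q, hql, ?_⟩
        intro c hc h1 h2
        obtain ⟨d, hd⟩ := hq2 c hc
        have hne1 : ((c, d) : V × W) ≠ (x, w₀) := fun h => h1 (congrArg Prod.fst h)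
        have hne2 : ((c, d) : V × W) ≠ (x', w₀) := fun h => h2 (congrArg Prod.fst h)
        have hnY : (c, d) ∉ Y := hp2 _ hd hne1 hne2
        exact fun hcT => hnY (hcT d)
    have hTle : T.ncard ≤ muT G := le_csSup (tmv_bddAbove G) ⟨T, hTtmv, rfl⟩
    set A : Finset (V × W) := Y.toFinset with hA
    have hYA : Y.ncard = A.card := Set.ncard_eq_toFinset_card' Y
    have hfib : A.card = ∑ x : V, (A.filter fun p => p.1 = x).card :=
      Finset.card_eq_sum_card_fiberwise (fun p _ => Finset.mem_univ p.1)
    have hbound : ∀ x : V, (A.filter fun p => p.1 = x).card ≤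
        (Fintype.card W - 1) + (if x ∈ T then 1 else 0) := by
      intro x
      have hinj : Set.InjOn (Prod.snd : V × W → W) (((A.filter fun p => p.1 = x) : Finset (V × W)) : Set (V × W)) := by
        rintro ⟨a1, b1⟩ h1 ⟨a2, b2⟩ h2 h
        simp only [Finset.coe_filter, Set.mem_setOf_eq] at h1 h2
        simp only at h
        exact Prod.ext (h1.2.trans h2.2.symm) h
      rw [← Finset.card_image_of_injOn hinj]
      by_cases hxT : x ∈ T
      · rw [if_pos hxT]
        have h1 := Finset.card_le_univ ((A.filter fun p => p.1 = x).image Prod.snd)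
        omega
      · rw [if_neg hxT, add_zero]
        obtain ⟨b1, hb1⟩ : ∃ b, (x, b) ∉ Y := by
          by_contra hcon
          push_neg at hcon
          exact hxT hcon
        have hsub : (A.filter fun p => p.1 = x).image Prod.snd ⊆ Finset.univ.erase b1 := by
          intro b hb
          simp only [Finset.mem_image, Finset.mem_filter] at hb
          obtain ⟨p, ⟨hpA, hpx⟩, rfl⟩ := hb
          refine Finset.mem_erase.mpr ⟨?_, Finset.mem_univ _⟩
          rintro rfl
          apply hb1
          have hpY : p ∈ Y := by
            rw [hA, Set.mem_toFinset] at hpA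
            exact hpA
          rwa [show ((x, p.2) : V × W) = p from Prod.ext hpx.symm rfl]
        calc ((A.filter fun p => p.1 = x).image Prod.snd).card
            ≤ (Finset.univ.erase b1).card := Finset.card_le_card hsub
          _ = Fintype.card W - 1 := by
              rw [Finset.card_erase_of_mem (Finset.mem_univ _), Finset.card_univ]
    have h4 : (Finset.univ.filter (fun x => x ∈ T)).card = T.ncard := by
      rw [Set.ncard_eq_toFinset_card' T]
      congr 1
      ext a
      simp
    have h5 : ∑ x : V, (if x ∈ T then 1 else 0) =
        (Finset.univ.filter (fun x => x ∈ T)).card :=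
      (Finset.card_filter _ _).symm
    calc Y.ncard = A.card := hYA
      _ = ∑ x : V, (A.filter fun p => p.1 = x).card := hfib
      _ ≤ ∑ x : V, ((Fintype.card W - 1) + (if x ∈ T then 1 else 0)) :=
          Finset.sum_le_sum (fun x _ => hbound x)
      _ = Fintype.card V * (Fintype.card W - 1) + T.ncard := by
          rw [Finset.sum_add_distrib, Finset.sum_const, Finset.card_univ, smul_eq_mul,
            h5, h4]
      _ ≤ Fintype.card V * (Fintype.card W - 1) + muT G :=
          Nat.add_le_add_left hTle _
  have hfinal1 : muT (lexProd G H) ≤ Fintype.card V * (Fintype.card W - 1) + muT G :=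
    csSup_le ⟨_, hmemLower⟩ hub
  have hfinal2 : Fintype.card V * (Fintype.card W - 1) + muT G ≤ muT (lexProd G H) :=
    le_csSup (tmv_bddAbove (lexProd G H)) hmemLower
  omega
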